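/- Let L₁ = a₁x₁ + b₁x₂ and L₂ = a₂x₁ + b₂x₂ be non-proportional integral linear forms and Q a binary quadratic form irreducible over ℚ, with resultants Δ₁₂ = a₁b₂ − a₂b₁ and Δ_{i3} = Q(−b_i, a_i). If for some pair 1 ≤ i < j ≤ 3 one has v_p(Δ_{ij}) < min{ν_i, ν_j}, then there is no (x₁,x₂) ∈ ℤ² with gcd(x₁,x₂,p) = 1 satisfying p^{ν₁} | L₁(x), p^{ν₂} | L₂(x), p^{ν₃} | Q(x). -/

import Mathlib

private lemma key_aux {p : ℕ} (hp : p.Prime) {m e : ℕ} {D x₁ x₂ : ℤ}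
    (hD : D ≠ 0) (hv : padicValInt p D < m)
    (h1 : (p : ℤ) ^ m ∣ D * x₁ ^ e) (h2 : (p : ℤ) ^ m ∣ D * x₂ ^ e)
    (hx : ¬ (p : ℤ) ∣ x₁ ∨ ¬ (p : ℤ) ∣ x₂) : False := by
  have hpz : Prime (p : ℤ) := Nat.prime_iff_prime_int.mp hp
  have hdvd : (p : ℤ) ^ m ∣ D := by
    rcases hx with hx | hx
    · exact (((hpz.coprime_iff_not_dvd.2 hx)).pow).dvd_of_dvd_mul_right h1
    · exact (((hpz.coprime_iff_not_dvd.2 hx)).pow).dvd_of_dvd_mul_right h2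
  haveI : Fact p.Prime := ⟨hp⟩
  rcases (padicValInt_dvd_iff m D).1 hdvd with h | h
  · exact hD h
  · omega

private lemma delta_ne_zero {a b a₃ b₃ c₃ : ℤ} (hab : ¬ (a = 0 ∧ b = 0))
    (hirr : ¬ IsSquare (c₃ ^ 2 - 4 * a₃ * b₃)) :
    a₃ * b ^ 2 + b₃ * a ^ 2 - c₃ * a * b ≠ 0 := by
  intro hΔ
  apply hirr
  have key : ∀ u v : ℤ, u ≠ 0 → (c₃ ^ 2 - 4 * a₃ * b₃) * u ^ 2 = v ^ 2 →
      IsSquare (c₃ ^ 2 - 4 * a₃ * b₃) := by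
    intro u v hu hsq
    have hdvd : u ^ 2 ∣ v ^ 2 := ⟨c₃ ^ 2 - 4 * a₃ * b₃, by linarith [hsq]⟩
    obtain ⟨k, hk⟩ := (Int.pow_dvd_pow_iff two_ne_zero).1 hdvd
    have : u ^ 2 * (c₃ ^ 2 - 4 * a₃ * b₃) = u ^ 2 * (k * k) := by
      rw [mul_comm (u^2)]; rw [hsq, hk]; ring
    exact ⟨k, mul_left_cancel₀ (pow_ne_zero 2 hu) this⟩
  rcases ne_or_eq a 0 with ha | ha
  · refine key a (c₃ * a - 2 * a₃ * b) ha ?_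
    linear_combination (-4*a₃) * hΔ
  · have hb : b ≠ 0 := fun hb => hab ⟨ha, hb⟩
    refine key b (c₃ * b - 2 * b₃ * a) hb ?_
    linear_combination (-4*b₃) * hΔ

theorem stmt6 (a₁ b₁ a₂ b₂ a₃ b₃ c₃ : ℤ)
    (hprop : a₁ * b₂ - a₂ * b₁ ≠ 0)
    (hirr : ¬ IsSquare (c₃ ^ 2 - 4 * a₃ * b₃))
    (p : ℕ) (hp : p.Prime) (ν₁ ν₂ ν₃ : ℕ)
    (h : padicValInt p (a₁ * b₂ - a₂ * b₁) < min ν₁ ν₂ ∨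
         padicValInt p (a₃ * b₁ ^ 2 + b₃ * a₁ ^ 2 - c₃ * a₁ * b₁) < min ν₁ ν₃ ∨
         padicValInt p (a₃ * b₂ ^ 2 + b₃ * a₂ ^ 2 - c₃ * a₂ * b₂) < min ν₂ ν₃) :
    ¬ ∃ x : ℤ × ℤ, Int.gcd (Int.gcd x.1 x.2) p = 1 ∧
        (p : ℤ) ^ ν₁ ∣ a₁ * x.1 + b₁ * x.2 ∧
        (p : ℤ) ^ ν₂ ∣ a₂ * x.1 + b₂ * x.2 ∧
        (p : ℤ) ^ ν₃ ∣ a₃ * x.1 ^ 2 + b₃ * x.2 ^ 2 + c₃ * x.1 * x.2 := by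
  rintro ⟨⟨x₁, x₂⟩, hg, d1, d2, d3⟩
  simp only at hg d1 d2 d3
  -- not both coordinates divisible by p
  have hx : ¬ (p : ℤ) ∣ x₁ ∨ ¬ (p : ℤ) ∣ x₂ := by
    by_contra hc
    push_neg at hc
    have h1 : (p : ℤ) ∣ (Int.gcd x₁ x₂ : ℤ) := Int.natCast_dvd_natCast.2 (Int.dvd_gcd hc.1 hc.2)
    have h2 : p ∣ Int.gcd x₁ x₂ := Int.natCast_dvd_natCast.1 h1
    have h3 : p ∣ Int.gcd (Int.gcd x₁ x₂ : ℤ) (p : ℤ) := by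
      simp only [Int.gcd_natCast_natCast]
      exact Nat.dvd_gcd h2 dvd_rfl
    rw [hg] at h3
    exact hp.one_lt.ne' (Nat.dvd_one.1 h3)
  rcases h with hv | hv | hv
  · -- case Δ₁₂
    have hm1 : (p : ℤ) ^ min ν₁ ν₂ ∣ a₁ * x₁ + b₁ * x₂ :=
      (pow_dvd_pow _ (min_le_left _ _)).trans d1
    have hm2 : (p : ℤ) ^ min ν₁ ν₂ ∣ a₂ * x₁ + b₂ * x₂ :=
      (pow_dvd_pow _ (min_le_right _ _)).trans d2
    have e1 : (p : ℤ) ^ min ν₁ ν₂ ∣ (a₁ * b₂ - a₂ * b₁) * x₁ ^ 1 := by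
      have : (a₁ * b₂ - a₂ * b₁) * x₁ ^ 1
          = b₂ * (a₁ * x₁ + b₁ * x₂) - b₁ * (a₂ * x₁ + b₂ * x₂) := by ring
      rw [this]; exact dvd_sub (hm1.mul_left _) (hm2.mul_left _)
    have e2 : (p : ℤ) ^ min ν₁ ν₂ ∣ (a₁ * b₂ - a₂ * b₁) * x₂ ^ 1 := by
      have : (a₁ * b₂ - a₂ * b₁) * x₂ ^ 1
          = a₁ * (a₂ * x₁ + b₂ * x₂) - a₂ * (a₁ * x₁ + b₁ * x₂) := by ring
      rw [this]; exact dvd_sub (hm2.mul_left _) (hm1.mul_left _)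
    exact key_aux hp hprop hv e1 e2 hx
  · -- case Δ₁₃
    have hD : a₃ * b₁ ^ 2 + b₃ * a₁ ^ 2 - c₃ * a₁ * b₁ ≠ 0 := by
      refine delta_ne_zero ?_ hirr
      rintro ⟨ha, hb⟩
      exact hprop (by rw [ha, hb]; ring)
    have hm1 : (p : ℤ) ^ min ν₁ ν₃ ∣ a₁ * x₁ + b₁ * x₂ :=
      (pow_dvd_pow _ (min_le_left _ _)).trans d1
    have hm3 : (p : ℤ) ^ min ν₁ ν₃ ∣ a₃ * x₁ ^ 2 + b₃ * x₂ ^ 2 + c₃ * x₁ * x₂ :=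
      (pow_dvd_pow _ (min_le_right _ _)).trans d3
    have e1 : (p : ℤ) ^ min ν₁ ν₃ ∣ (a₃ * b₁ ^ 2 + b₃ * a₁ ^ 2 - c₃ * a₁ * b₁) * x₁ ^ 2 := by
      have : (a₃ * b₁ ^ 2 + b₃ * a₁ ^ 2 - c₃ * a₁ * b₁) * x₁ ^ 2
          = b₁ ^ 2 * (a₃ * x₁ ^ 2 + b₃ * x₂ ^ 2 + c₃ * x₁ * x₂)
            - (b₃ * (a₁ * x₁ + b₁ * x₂) - 2 * b₃ * a₁ * x₁ + c₃ * b₁ * x₁)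
              * (a₁ * x₁ + b₁ * x₂) := by ring
      rw [this]; exact dvd_sub (hm3.mul_left _) (hm1.mul_left _)
    have e2 : (p : ℤ) ^ min ν₁ ν₃ ∣ (a₃ * b₁ ^ 2 + b₃ * a₁ ^ 2 - c₃ * a₁ * b₁) * x₂ ^ 2 := by
      have : (a₃ * b₁ ^ 2 + b₃ * a₁ ^ 2 - c₃ * a₁ * b₁) * x₂ ^ 2
          = a₁ ^ 2 * (a₃ * x₁ ^ 2 + b₃ * x₂ ^ 2 + c₃ * x₁ * x₂)
            - (a₃ * (a₁ * x₁ + b₁ * x₂) - 2 * a₃ * b₁ * x₂ + c₃ * a₁ * x₂)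
              * (a₁ * x₁ + b₁ * x₂) := by ring
      rw [this]; exact dvd_sub (hm3.mul_left _) (hm1.mul_left _)
    exact key_aux hp hD hv e1 e2 hx
  · -- case Δ₂₃
    have hD : a₃ * b₂ ^ 2 + b₃ * a₂ ^ 2 - c₃ * a₂ * b₂ ≠ 0 := by
      refine delta_ne_zero ?_ hirr
      rintro ⟨ha, hb⟩
      exact hprop (by rw [ha, hb]; ring)
    have hm2 : (p : ℤ) ^ min ν₂ ν₃ ∣ a₂ * x₁ + b₂ * x₂ :=
      (pow_dvd_pow _ (min_le_left _ _)).trans d2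
    have hm3 : (p : ℤ) ^ min ν₂ ν₃ ∣ a₃ * x₁ ^ 2 + b₃ * x₂ ^ 2 + c₃ * x₁ * x₂ :=
      (pow_dvd_pow _ (min_le_right _ _)).trans d3
    have e1 : (p : ℤ) ^ min ν₂ ν₃ ∣ (a₃ * b₂ ^ 2 + b₃ * a₂ ^ 2 - c₃ * a₂ * b₂) * x₁ ^ 2 := by
      have : (a₃ * b₂ ^ 2 + b₃ * a₂ ^ 2 - c₃ * a₂ * b₂) * x₁ ^ 2
          = b₂ ^ 2 * (a₃ * x₁ ^ 2 + b₃ * x₂ ^ 2 + c₃ * x₁ * x₂)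
            - (b₃ * (a₂ * x₁ + b₂ * x₂) - 2 * b₃ * a₂ * x₁ + c₃ * b₂ * x₁)
              * (a₂ * x₁ + b₂ * x₂) := by ring
      rw [this]; exact dvd_sub (hm3.mul_left _) (hm2.mul_left _)
    have e2 : (p : ℤ) ^ min ν₂ ν₃ ∣ (a₃ * b₂ ^ 2 + b₃ * a₂ ^ 2 - c₃ * a₂ * b₂) * x₂ ^ 2 := by
      have : (a₃ * b₂ ^ 2 + b₃ * a₂ ^ 2 - c₃ * a₂ * b₂) * x₂ ^ 2
          = a₂ ^ 2 * (a₃ * x₁ ^ 2 + b₃ * x₂ ^ 2 + c₃ * x₁ * x₂)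
            - (a₃ * (a₂ * x₁ + b₂ * x₂) - 2 * a₃ * b₂ * x₂ + c₃ * a₂ * x₂)
              * (a₂ * x₁ + b₂ * x₂) := by ring
      rw [this]; exact dvd_sub (hm3.mul_left _) (hm2.mul_left _)
    exact key_aux hp hD hv e1 e2 hx
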